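/- If A ⊇ B is H-separable and V, W are right A-modules such that V is isomorphic to a direct summand of W as B-modules (via restriction), then V is isomorphic to a direct summand of W^m as A-modules for some m ∈ ℕ. -/

import Mathlib

/-!  A noncommutative relative tensor product `L ⊗_C R` for a ring `C` mapping
into rings `L` (acting on the right through `f`) and `R` (acting on the left
through `g`), together with the outer left `L`-action `lact`, the outer right
`R`-action `ract`, a lifting principle for balanced biadditive maps, and the
multiplication map. -/

open scoped TensorProduct

noncomputable section
namespace NCT

variable {C L R : Type*} [Ring C] [Ring L] [Ring R]

/-- The submodule of relations `(l * f c) ⊗ r - l ⊗ (g c * r)`. -/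
def rel (f : C →+* L) (g : C →+* R) : Submodule ℤ (L ⊗[ℤ] R) :=
  Submodule.span ℤ
    {x | ∃ (l : L) (c : C) (r : R), x = (l * f c) ⊗ₜ[ℤ] r - l ⊗ₜ[ℤ] (g c * r)}

/-- The relative tensor product `L ⊗_C R`. -/
def Tens (f : C →+* L) (g : C →+* R) : Type _ := (L ⊗[ℤ] R) ⧸ rel f g

instance (f : C →+* L) (g : C →+* R) : AddCommGroup (Tens f g) :=
  inferInstanceAs (AddCommGroup ((L ⊗[ℤ] R) ⧸ rel f g))

variable (f : C →+* L) (g : C →+* R)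

/-- The canonical image of `l ⊗ r` in `L ⊗_C R`. -/
def tmul (l : L) (r : R) : Tens f g := Submodule.Quotient.mk (l ⊗ₜ[ℤ] r)

lemma tmul_rel (l : L) (c : C) (r : R) :
    tmul f g (l * f c) r = tmul f g l (g c * r) := by
  refine (Submodule.Quotient.eq _).2 ?_
  exact Submodule.subset_span ⟨l, c, r, rfl⟩

lemma tmul_add_left (l l' : L) (r : R) :
    tmul f g (l + l') r = tmul f g l r + tmul f g l' r := by
  show Submodule.Quotient.mk _ = _
  rw [TensorProduct.add_tmul, Submodule.Quotient.mk_add]; rfl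

lemma tmul_add_right (l : L) (r r' : R) :
    tmul f g l (r + r') = tmul f g l r + tmul f g l r' := by
  show Submodule.Quotient.mk _ = _
  rw [TensorProduct.tmul_add, Submodule.Quotient.mk_add]; rfl

/-- Package a biadditive map as a bundled `AddMonoidHom`-valued hom. -/
def mkBilin {M N P : Type*} [AddCommGroup M] [AddCommGroup N] [AddCommGroup P]
    (φ : M → N → P)
    (h1 : ∀ m m' n, φ (m + m') n = φ m n + φ m' n)
    (h2 : ∀ m n n', φ m (n + n') = φ m n + φ m n') : M →+ N →+ P :=
  AddMonoidHom.mk' (fun m => AddMonoidHom.mk' (φ m) (h2 m))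
    (fun m m' => by ext n; exact h1 m m' n)

@[simp] lemma mkBilin_apply {M N P : Type*} [AddCommGroup M] [AddCommGroup N] [AddCommGroup P]
    (φ : M → N → P) (h1 h2) (m : M) (n : N) : mkBilin φ h1 h2 m n = φ m n := rfl

/-- Lift a balanced biadditive map to the relative tensor product. -/
def lift {P : Type*} [AddCommGroup P] (φ : L →+ R →+ P)
    (hbal : ∀ l c r, φ (l * f c) r = φ l (g c * r)) : Tens f g →+ P :=
  (Submodule.liftQ (rel f g)
    (TensorProduct.liftAddHom φ (by
      intro n l r
      simp only [AddMonoidHom.map_zsmul, AddMonoidHom.smul_apply]) ).toIntLinearMap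
    (by
      rw [rel, Submodule.span_le]
      rintro x ⟨l, c, r, rfl⟩
      simp only [SetLike.mem_coe, LinearMap.mem_ker, AddMonoidHom.coe_toIntLinearMap,
        map_sub, TensorProduct.liftAddHom_tmul]
      rw [hbal, sub_self])).toAddMonoidHom

@[simp] lemma lift_tmul {P : Type*} [AddCommGroup P] (φ : L →+ R →+ P)
    (hbal : ∀ l c r, φ (l * f c) r = φ l (g c * r)) (l : L) (r : R) :
    lift f g φ hbal (tmul f g l r) = φ l r := rfl

/-- The outer left action of `L` on `L ⊗_C R`. -/
def lact (l : L) : Tens f g →+ Tens f g :=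
  lift f g (mkBilin (fun l' r => tmul f g (l * l') r)
      (fun a b r => by rw [mul_add, tmul_add_left])
      (fun a r s => by rw [tmul_add_right]))
    (fun l' c r => by simp only [mkBilin_apply]; rw [← mul_assoc, tmul_rel])

@[simp] lemma lact_tmul (l l' : L) (r : R) :
    lact f g l (tmul f g l' r) = tmul f g (l * l') r := rfl

/-- The outer right action of `R` on `L ⊗_C R`. -/
def ract (r : R) : Tens f g →+ Tens f g :=
  lift f g (mkBilin (fun l' r' => tmul f g l' (r' * r))
      (fun a b r' => by rw [tmul_add_left])
      (fun a r' s => by rw [add_mul, tmul_add_right]))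
    (fun l' c r' => by simp only [mkBilin_apply]; rw [tmul_rel, mul_assoc])

@[simp] lemma ract_tmul (r r' : R) (l : L) :
    ract f g r (tmul f g l r') = tmul f g l (r' * r) := rfl

/-- The map induced on relative tensor products by a ring map on the left factor. -/
def mapLeft {L' : Type*} [Ring L'] (h : L →+* L') :
    Tens f g →+ Tens (h.comp f) g :=
  lift f g (mkBilin (fun l r => tmul (h.comp f) g (h l) r)
      (fun a b r => by rw [map_add, tmul_add_left])
      (fun a r s => by rw [tmul_add_right]))
    (fun l c r => by
      simp only [mkBilin_apply, map_mul]
      exact tmul_rel (h.comp f) g (h l) c r)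

@[simp] lemma mapLeft_tmul {L' : Type*} [Ring L'] (h : L →+* L') (l : L) (r : R) :
    mapLeft f g h (tmul f g l r) = tmul (h.comp f) g (h l) r := rfl

/-- The multiplication map `L ⊗_C R → R`, `l ⊗ r ↦ jl l * r`, for a ring map
`jl : L → R` compatible with the two maps from `C`. -/
def mulMap (jl : L →+* R) (hcomp : ∀ c, jl (f c) = g c) : Tens f g →+ R :=
  lift f g (mkBilin (fun l r => jl l * r)
      (fun a b r => by rw [map_add, add_mul])
      (fun a r s => by rw [mul_add]))
    (fun l c r => by simp only [mkBilin_apply]; rw [map_mul, hcomp, mul_assoc])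

@[simp] lemma mulMap_tmul (jl : L →+* R) (hcomp : ∀ c, jl (f c) = g c) (l : L) (r : R) :
    mulMap f g jl hcomp (tmul f g l r) = jl l * r := rfl

/-- Induction principle: every element of `L ⊗_C R` is built from `tmul`s. -/
lemma tens_induction {p : Tens f g → Prop} (zero : p 0)
    (tm : ∀ l r, p (tmul f g l r)) (add : ∀ x y, p x → p y → p (x + y)) :
    ∀ x, p x := by
  intro x
  obtain ⟨y, rfl⟩ := Submodule.Quotient.mk_surjective _ x
  induction y using TensorProduct.induction_on with
  | zero => exact zero
  | tmul l r => exact tm l r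
  | add a b ha hb =>
      rw [Submodule.Quotient.mk_add]
      exact add _ _ ha hb

end NCT
end

noncomputable section
open NCT

/-- The tower `A ⊇ B ⊇ C` (given by injective ring maps `ι : C → B`, `j : B → A`) is
*left relative H-separable*: `B ⊗_C A ⊕ * ≅ A^n` as `B`-`A`-bimodules. -/
def LeftRelHSep {C B A : Type*} [Ring C] [Ring B] [Ring A]
    (ι : C →+* B) (j : B →+* A) (n : ℕ) : Prop :=
  ∃ (i : Tens ι (j.comp ι) →+ (Fin n → A)) (p : (Fin n → A) →+ Tens ι (j.comp ι)),
    (∀ (b : B) x, i (lact ι (j.comp ι) b x) = fun k => j b * i x k) ∧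
    (∀ (a : A) x, i (ract ι (j.comp ι) a x) = fun k => i x k * a) ∧
    (∀ (b : B) v, p (fun k => j b * v k) = lact ι (j.comp ι) b (p v)) ∧
    (∀ (a : A) v, p (fun k => v k * a) = ract ι (j.comp ι) a (p v)) ∧
    ∀ x, p (i x) = x

/-- `B` is a *left relative separable extension of `C` in `A`*: the multiplication map
`μ : B ⊗_C A → A` splits as a `B`-`A`-bimodule epimorphism. -/
def LeftRelSep {C B A : Type*} [Ring C] [Ring B] [Ring A]
    (ι : C →+* B) (j : B →+* A) : Prop :=
  ∃ σ : A →+ Tens ι (j.comp ι),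
    (∀ (b : B) (a : A), σ (j b * a) = lact ι (j.comp ι) b (σ a)) ∧
    (∀ (a a' : A), σ (a * a') = ract ι (j.comp ι) a' (σ a)) ∧
    ∀ a, mulMap ι (j.comp ι) j (fun _ => rfl) (σ a) = a

/-- `B ⊇ C` is a separable extension: there is a `B`-central element
`e ∈ B ⊗_C B` with `μ(e) = 1`. -/
def IsSepExt {C B : Type*} [Ring C] [Ring B] (ι : C →+* B) : Prop :=
  ∃ e : Tens ι ι, (∀ b : B, lact ι ι b e = ract ι ι b e) ∧
    mulMap ι ι (RingHom.id B) (fun _ => rfl) e = 1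

/-- `A ⊇ B` is H-separable: `A ⊗_B A ⊕ * ≅ A^n` as `A`-`A`-bimodules. -/
def IsHSep {B A : Type*} [Ring B] [Ring A] (j : B →+* A) : Prop :=
  ∃ (n : ℕ) (i : Tens j j →+ (Fin n → A)) (p : (Fin n → A) →+ Tens j j),
    (∀ (a : A) x, i (lact j j a x) = fun k => a * i x k) ∧
    (∀ (a : A) x, i (ract j j a x) = fun k => i x k * a) ∧
    (∀ (a : A) v, p (fun k => a * v k) = lact j j a (p v)) ∧
    (∀ (a : A) v, p (fun k => v k * a) = ract j j a (p v)) ∧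
    ∀ x, p (i x) = x


section Aux
open NCT MulOpposite

variable {B A : Type*} [Ring B] [Ring A] (j : B →+* A)

/-- The multiplication map `A ⊗_B A → A`. -/
def muA : Tens j j →+ A := mulMap j j (RingHom.id A) (fun _ => rfl)

@[simp] lemma muA_tmul (l r : A) : muA j (tmul j j l r) = l * r := by
  simp [muA]

lemma lact_lact (a b : A) (x : Tens j j) :
    lact j j a (lact j j b x) = lact j j (a * b) x := by
  induction x using tens_induction with
  | zero => simp
  | tm l r => rw [lact_tmul, lact_tmul, lact_tmul, mul_assoc]
  | add x y hx hy => simp [map_add, hx, hy]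

lemma lact_ract (a b : A) (x : Tens j j) :
    lact j j a (ract j j b x) = ract j j b (lact j j a x) := by
  induction x using tens_induction with
  | zero => simp
  | tm l r => rw [ract_tmul, lact_tmul, lact_tmul, ract_tmul]
  | add x y hx hy => simp [map_add, hx, hy]

lemma muA_lact (a : A) (x : Tens j j) : muA j (lact j j a x) = a * muA j x := by
  induction x using tens_induction with
  | zero => simp
  | tm l r => rw [lact_tmul, muA_tmul, muA_tmul, mul_assoc]
  | add x y hx hy => simp [map_add, hx, hy, mul_add]

lemma muA_ract (a : A) (x : Tens j j) : muA j (ract j j a x) = muA j x * a := by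
  induction x using tens_induction with
  | zero => simp
  | tm l r => rw [ract_tmul, muA_tmul, muA_tmul, mul_assoc]
  | add x y hx hy => simp [map_add, hx, hy, add_mul]

/-- The map `x ⊗ y ↦ x * c * y` for `c` centralizing `j(B)`. -/
def betaMap (c : A) (hc : ∀ b, j b * c = c * j b) : Tens j j →+ A :=
  lift j j (mkBilin (fun x y => x * c * y)
      (fun x x' y => by rw [add_mul, add_mul])
      (fun x y y' => by rw [mul_add]))
    (fun l b r => by
      simp only [mkBilin_apply]
      rw [mul_assoc l (j b) c, hc, ← mul_assoc l c (j b), mul_assoc (l * c) (j b) r])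

@[simp] lemma betaMap_tmul (c : A) (hc : ∀ b, j b * c = c * j b) (x y : A) :
    betaMap j c hc (tmul j j x y) = x * c * y := rfl

lemma betaMap_lact (c : A) (hc : ∀ b, j b * c = c * j b) (a : A) (x : Tens j j) :
    betaMap j c hc (lact j j a x) = a * betaMap j c hc x := by
  induction x using tens_induction with
  | zero => simp
  | tm l r => rw [lact_tmul, betaMap_tmul, betaMap_tmul, mul_assoc, mul_assoc, mul_assoc]
  | add x y hx hy => simp [map_add, hx, hy, mul_add]

lemma betaMap_ract (c : A) (hc : ∀ b, j b * c = c * j b) (a : A) (x : Tens j j) :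
    betaMap j c hc (ract j j a x) = betaMap j c hc x * a := by
  induction x using tens_induction with
  | zero => simp
  | tm l r => rw [ract_tmul, betaMap_tmul, betaMap_tmul, mul_assoc (l * c) r a]
  | add x y hx hy => simp [map_add, hx, hy, add_mul]


lemma exists_central_combination {A : Type*} [Ring A] {n : ℕ} (d uu : Fin n → A)
    (hd : ∀ k, d k ∈ Subring.center A)
    (h1 : (1 : A) ∈ Submodule.span (Subring.center A) (Set.range uu))
    (huu : ∀ i k, uu i * uu k ∈ Submodule.span (Subring.center A) (Set.range uu))
    (hsum : (1 : A) = ∑ k, uu k * d k) :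
    ∃ z : Fin n → A, (∀ k, z k ∈ Subring.center A) ∧ ∑ k, z k * d k = 1 := by
  classical
  obtain ⟨r, hr1, hr0⟩ :=
    Submodule.exists_sub_one_mem_and_smul_eq_zero_of_fg_of_le_smul
      (Ideal.span (Set.range (fun k => (⟨d k, hd k⟩ : Subring.center A))))
      (Submodule.span (Subring.center A) (Set.range uu))
      (Submodule.fg_span (Set.finite_range uu))
      (by
        rw [Submodule.span_le]
        rintro _ ⟨i, rfl⟩
        have hdec : uu i = ∑ k, d k * (uu i * uu k) := by
          calc uu i = uu i * 1 := (mul_one _).symm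
            _ = uu i * ∑ k, uu k * d k := by rw [← hsum]
            _ = ∑ k, (⟨d k, hd k⟩ : Subring.center A) • (uu i * uu k) := by
                rw [Finset.mul_sum]
                refine Finset.sum_congr rfl fun k _ => ?_
                show uu i * (uu k * d k) = d k * (uu i * uu k)
                rw [← mul_assoc]
                exact Subring.mem_center_iff.1 (hd k) _
        rw [SetLike.mem_coe, hdec]
        exact Submodule.sum_mem _ fun k _ =>
          Submodule.smul_mem_smul (Ideal.subset_span (Set.mem_range_self k)) (huu i k))
  have hrz : r = 0 := by
    apply Subtype.ext
    have h3 : (r : A) * 1 = 0 := hr0 1 h1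
    rw [ZeroMemClass.coe_zero]
    rwa [mul_one] at h3
  have h1J : (1 : Subring.center A) ∈
      Ideal.span (Set.range (fun k => (⟨d k, hd k⟩ : Subring.center A))) := by
    rw [hrz, zero_sub] at hr1
    simpa using neg_mem hr1
  obtain ⟨z, hz⟩ := (Submodule.mem_span_range_iff_exists_fun _).1 h1J
  refine ⟨fun k => (z k : A), fun k => (z k).2, ?_⟩
  have h4 := congrArg ((Subring.center A).subtype) hz
  rw [map_sum, map_one] at h4
  simpa [smul_eq_mul] using h4

variable {V W : Type*} [AddCommGroup V] [AddCommGroup W] [Module Aᵐᵒᵖ V] [Module Aᵐᵒᵖ W]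

/-- The map `a ⊗ a' ↦ op (c * a') • F (op a • v)` on `A ⊗_B A`, for `F` a `B`-linear
additive map and `c` centralizing `j(B)`. -/
def philift (F : V →+ W) (c : A) (hc : ∀ b, j b * c = c * j b)
    (hF : ∀ (b : B) (v : V), F (op (j b) • v) = op (j b) • F v) (v : V) :
    Tens j j →+ W :=
  lift j j (mkBilin (fun a a' => op (c * a') • F (op a • v))
      (fun a a' y => by
        rw [op_add, add_smul, map_add, smul_add])
      (fun a y y' => by
        rw [mul_add, op_add, add_smul]))
    (fun a b a' => by
      simp only [mkBilin_apply]
      have h1 : (op (a * j b) : Aᵐᵒᵖ) • v = op (j b) • op a • v := by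
        rw [← mul_smul, ← op_mul]
      rw [h1, hF, ← mul_smul, ← op_mul,
        show j b * (c * a') = c * (j b * a') by rw [← mul_assoc, hc, mul_assoc]])

@[simp] lemma philift_tmul (F : V →+ W) (c : A) (hc : ∀ b, j b * c = c * j b)
    (hF : ∀ (b : B) (v : V), F (op (j b) • v) = op (j b) • F v) (v : V) (a a' : A) :
    philift j F c hc hF v (tmul j j a a') = op (c * a') • F (op a • v) := rfl

lemma philift_zero (F : V →+ W) (c : A) (hc : ∀ b, j b * c = c * j b)
    (hF : ∀ (b : B) (v : V), F (op (j b) • v) = op (j b) • F v) (x : Tens j j) :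
    philift j F c hc hF 0 x = 0 := by
  induction x using tens_induction with
  | zero => simp
  | tm l r => rw [philift_tmul, smul_zero, map_zero, smul_zero]
  | add x y hx hy => simp [map_add, hx, hy]

lemma philift_add (F : V →+ W) (c : A) (hc : ∀ b, j b * c = c * j b)
    (hF : ∀ (b : B) (v : V), F (op (j b) • v) = op (j b) • F v) (v v' : V) (x : Tens j j) :
    philift j F c hc hF (v + v') x = philift j F c hc hF v x + philift j F c hc hF v' x := by
  induction x using tens_induction with
  | zero => simp
  | tm l r => rw [philift_tmul, philift_tmul, philift_tmul, smul_add, map_add, smul_add]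
  | add x y hx hy => simp only [map_add, hx, hy]; abel

lemma philift_smul (F : V →+ W) (c : A) (hc : ∀ b, j b * c = c * j b)
    (hF : ∀ (b : B) (v : V), F (op (j b) • v) = op (j b) • F v) (v : V) (a : A) (x : Tens j j) :
    philift j F c hc hF (op a • v) x = philift j F c hc hF v (lact j j a x) := by
  induction x using tens_induction with
  | zero => simp
  | tm l r => rw [philift_tmul, lact_tmul, philift_tmul, ← mul_smul, ← op_mul]
  | add x y hx hy => simp [map_add, hx, hy]

lemma philift_ract (F : V →+ W) (c : A) (hc : ∀ b, j b * c = c * j b)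
    (hF : ∀ (b : B) (v : V), F (op (j b) • v) = op (j b) • F v) (v : V) (a : A) (x : Tens j j) :
    philift j F c hc hF v (ract j j a x) = op a • philift j F c hc hF v x := by
  induction x using tens_induction with
  | zero => simp
  | tm l r =>
      rw [ract_tmul, philift_tmul, philift_tmul, ← mul_smul, ← op_mul, mul_assoc]
  | add x y hx hy => simp [map_add, hx, hy]

end Aux

/-- if `A ⊇ B` is H-separable and `V`, `W` are right `A`-modules with
`V` a direct summand of `W` as `B`-modules (by restriction), then `V` is a direct
summand of `W^m` as `A`-modules, for some `m`. -/
theorem summand_of_restriction_summand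
    {B A : Type*} [Ring B] [Ring A]
    (j : B →+* A) (hj : Function.Injective j) (hHsep : IsHSep j)
    (V W : Type*) [AddCommGroup V] [AddCommGroup W]
    [Module Aᵐᵒᵖ V] [Module Aᵐᵒᵖ W]
    (hVW : ∃ (i : V →+ W) (p : W →+ V),
      (∀ (b : B) (v : V), i (MulOpposite.op (j b) • v) = MulOpposite.op (j b) • i v) ∧
      (∀ (b : B) (w : W), p (MulOpposite.op (j b) • w) = MulOpposite.op (j b) • p w) ∧
      ∀ v, p (i v) = v) :
    ∃ (m : ℕ) (i : V →+ (Fin m → W)) (p : (Fin m → W) →+ V),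
      (∀ (a : A) (v : V), i (MulOpposite.op a • v) = fun k => MulOpposite.op a • i v k) ∧
      (∀ (a : A) (w : Fin m → W), p (fun k => MulOpposite.op a • w k) = MulOpposite.op a • p w) ∧
      ∀ v, p (i v) = v := by
  classical
  obtain ⟨n, i₀, p₀, hl, hr, hpl, hpr, hpi⟩ := hHsep
  obtain ⟨i₁, p₁, hi₁, hp₁, hpi₁⟩ := hVW
  have hsing : ∀ (k : Fin n) (a : A),
      (fun m => a * (Pi.single k (1 : A) : Fin n → A) m) = (Pi.single k a : Fin n → A) := by
    intro k a
    funext m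
    rcases eq_or_ne m k with h | h
    · subst h; rw [Pi.single_eq_same, Pi.single_eq_same, mul_one]
    · rw [Pi.single_eq_of_ne h, Pi.single_eq_of_ne h, mul_zero]
  have hsing' : ∀ (k : Fin n) (a : A),
      (fun m => (Pi.single k (1 : A) : Fin n → A) m * a) = (Pi.single k a : Fin n → A) := by
    intro k a
    funext m
    rcases eq_or_ne m k with h | h
    · subst h; rw [Pi.single_eq_same, Pi.single_eq_same, one_mul]
    · rw [Pi.single_eq_of_ne h, Pi.single_eq_of_ne h, zero_mul]
  have hK1 : ∀ c : Fin n → A,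
      p₀ c = ∑ k, NCT.lact j j (c k) (p₀ (Pi.single k (1 : A))) := by
    intro c
    conv_lhs => rw [← Finset.univ_sum_single c]
    rw [map_sum]
    refine Finset.sum_congr rfl fun k _ => ?_
    rw [← hsing k (c k), hpl]
  have hK2 : ∀ (a : A) (k : Fin n),
      NCT.lact j j a (p₀ (Pi.single k (1 : A)))
        = NCT.ract j j a (p₀ (Pi.single k (1 : A))) := by
    intro a k
    rw [← hpl, hsing k a, ← hsing' k a, hpr]
  have hone : NCT.tmul j j 1 1
      = ∑ k, NCT.lact j j (i₀ (NCT.tmul j j 1 1) k) (p₀ (Pi.single k (1 : A))) := by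
    have h := hK1 (i₀ (NCT.tmul j j 1 1))
    rwa [hpi] at h
  have hK3 : ∀ a' : A,
      (∑ k, NCT.lact j j (i₀ (NCT.tmul j j 1 1) k * a') (p₀ (Pi.single k (1 : A))))
        = NCT.tmul j j 1 a' := by
    intro a'
    have h := hK1 fun k => i₀ (NCT.tmul j j 1 1) k * a'
    rw [← hr, hpi, NCT.ract_tmul, one_mul] at h
    exact h.symm
  have hu : ∀ (b : B) (k : Fin n),
      j b * i₀ (NCT.tmul j j 1 1) k = i₀ (NCT.tmul j j 1 1) k * j b := by
    intro b k
    have h : NCT.lact j j (j b) (NCT.tmul j j 1 1)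
        = NCT.ract j j (j b) (NCT.tmul j j 1 1) := by
      rw [NCT.lact_tmul, NCT.ract_tmul, mul_one, one_mul]
      have h2 := NCT.tmul_rel j j 1 b 1
      rwa [one_mul, mul_one] at h2
    have h3 := congrArg i₀ h
    rw [hl, hr] at h3
    exact congrFun h3 k
  have hdc : ∀ (k : Fin n) (a : A),
      a * muA j (p₀ (Pi.single k (1 : A))) = muA j (p₀ (Pi.single k (1 : A))) * a := by
    intro k a
    rw [← muA_lact, hK2, muA_ract]
  have hsum1 : (1 : A)
      = ∑ k, i₀ (NCT.tmul j j 1 1) k * muA j (p₀ (Pi.single k (1 : A))) := by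
    have h := congrArg (muA j) hone
    rw [map_sum] at h
    simpa only [muA_lact, muA_tmul, one_mul] using h
  have hDelta : ∀ c : A, (∀ b : B, j b * c = c * j b) →
      c ∈ Submodule.span (Subring.center A) (Set.range (i₀ (NCT.tmul j j 1 1))) := by
    intro c hc
    have h := congrArg (betaMap j c hc) hone
    rw [map_sum] at h
    simp only [betaMap_lact, betaMap_tmul, one_mul, mul_one] at h
    rw [h]
    refine Submodule.sum_mem _ fun k _ => ?_
    have hz : betaMap j c hc (p₀ (Pi.single k (1 : A))) ∈ Subring.center A :=
      Subring.mem_center_iff.2 fun g => by rw [← betaMap_lact, hK2, betaMap_ract]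
    rw [show i₀ (NCT.tmul j j 1 1) k * betaMap j c hc (p₀ (Pi.single k (1 : A)))
        = (⟨_, hz⟩ : Subring.center A) • i₀ (NCT.tmul j j 1 1) k from
      Subring.mem_center_iff.1 hz _]
    exact Submodule.smul_mem _ _ (Submodule.subset_span ⟨k, rfl⟩)
  obtain ⟨z, hzc, hz1⟩ :=
    exists_central_combination (fun k => muA j (p₀ (Pi.single k (1 : A))))
      (i₀ (NCT.tmul j j 1 1))
      (fun k => Subring.mem_center_iff.2 fun g => hdc k g)
      (hDelta 1 fun b => by rw [mul_one, one_mul])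
      (fun i k => hDelta _ fun b => by
        rw [← mul_assoc, hu b i, mul_assoc, hu b k, ← mul_assoc])
      hsum1
  -- the separability element
  obtain ⟨e, he1, he2⟩ : ∃ e : NCT.Tens j j,
      (∀ a : A, NCT.lact j j a e = NCT.ract j j a e) ∧ muA j e = 1 := by
    refine ⟨∑ k, NCT.lact j j (z k) (p₀ (Pi.single k (1 : A))), fun a => ?_, ?_⟩
    · rw [map_sum, map_sum]
      refine Finset.sum_congr rfl fun k _ => ?_
      rw [lact_lact, show a * z k = z k * a from Subring.mem_center_iff.1 (hzc k) a,
        ← lact_lact, hK2, lact_ract]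
    · rw [map_sum]
      simpa only [muA_lact] using hz1
  have h1c : ∀ b : B, j b * (1 : A) = 1 * j b := fun b => by rw [mul_one, one_mul]
  refine ⟨n,
    AddMonoidHom.mk' (fun v => fun k =>
      philift j i₁ (i₀ (NCT.tmul j j 1 1) k) (fun b => hu b k) hi₁ v e) ?_,
    AddMonoidHom.mk' (fun w =>
      ∑ k, philift j p₁ 1 h1c hp₁ (w k) (p₀ (Pi.single k (1 : A)))) ?_, ?_, ?_, ?_⟩
  · intro v v'
    funext k
    exact philift_add j i₁ _ _ hi₁ v v' e
  · intro w w'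
    rw [← Finset.sum_add_distrib]
    exact Finset.sum_congr rfl fun k _ => philift_add j p₁ 1 h1c hp₁ (w k) (w' k) _
  · intro a v
    show (fun k => philift j i₁ (i₀ (NCT.tmul j j 1 1) k) (fun b => hu b k) hi₁
        (MulOpposite.op a • v) e)
      = fun k => MulOpposite.op a •
        philift j i₁ (i₀ (NCT.tmul j j 1 1) k) (fun b => hu b k) hi₁ v e
    funext k
    rw [philift_smul, he1, philift_ract]
  · intro a w
    show (∑ k, philift j p₁ 1 h1c hp₁ (MulOpposite.op a • w k) (p₀ (Pi.single k (1 : A))))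
      = MulOpposite.op a • ∑ k, philift j p₁ 1 h1c hp₁ (w k) (p₀ (Pi.single k (1 : A)))
    rw [Finset.smul_sum]
    refine Finset.sum_congr rfl fun k _ => ?_
    rw [philift_smul, hK2, philift_ract]
  · intro v
    show (∑ k, philift j p₁ 1 h1c hp₁
        (philift j i₁ (i₀ (NCT.tmul j j 1 1) k) (fun b => hu b k) hi₁ v e)
        (p₀ (Pi.single k (1 : A)))) = v
    have key : ∀ x : NCT.Tens j j,
        (∑ k, philift j p₁ 1 h1c hp₁
          (philift j i₁ (i₀ (NCT.tmul j j 1 1) k) (fun b => hu b k) hi₁ v x)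
          (p₀ (Pi.single k (1 : A))))
        = MulOpposite.op (muA j x) • v := by
      intro x
      induction x using NCT.tens_induction with
      | zero =>
          simp only [map_zero, philift_zero, Finset.sum_const_zero,
            MulOpposite.op_zero, zero_smul]
      | tm a a' =>
          have step1 : ∀ k : Fin n, philift j p₁ 1 h1c hp₁
              (philift j i₁ (i₀ (NCT.tmul j j 1 1) k) (fun b => hu b k) hi₁ v
                (NCT.tmul j j a a'))
              (p₀ (Pi.single k (1 : A)))
            = philift j p₁ 1 h1c hp₁ (i₁ (MulOpposite.op a • v))
              (NCT.lact j j (i₀ (NCT.tmul j j 1 1) k * a') (p₀ (Pi.single k (1 : A)))) := by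
            intro k
            rw [philift_tmul, philift_smul]
          rw [Finset.sum_congr rfl fun k _ => step1 k, ← map_sum, hK3, philift_tmul,
            one_mul, MulOpposite.op_one, one_smul, hpi₁, ← mul_smul, ← MulOpposite.op_mul,
            muA_tmul]
      | add x y hx hy =>
          simp only [map_add, philift_add, Finset.sum_add_distrib, hx, hy,
            MulOpposite.op_add, add_smul]
    rw [key e, he2, MulOpposite.op_one, one_smul]


end
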